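/- Let R be a commutative local ring and n ≥ 1. Then every matrix in SL_n(R) is a product of elementary matrices (transvections), i.e. the special linear group SL_n(R) is generated by the elementary matrices I + λ·E_{ij} with i ≠ j and λ ∈ R. -/

import Mathlib

open Matrix Finset

namespace SLGen

variable {R : Type*} [CommRing R]

variable {R : Type*} [CommRing R]

/-- The set of elementary matrices in `SL_m(R)`. -/
def TS (R : Type*) [CommRing R] (m : ℕ) : Set (Matrix.SpecialLinearGroup (Fin m) R) :=
  {M | ∃ (i j : Fin m) (c : R), i ≠ j ∧
    (M : Matrix (Fin m) (Fin m) R) = 1 + Matrix.single i j c}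

/-- A transvection as an element of `SL_m(R)`. -/
def tv {m : ℕ} (i j : Fin m) (hij : i ≠ j) (c : R) : Matrix.SpecialLinearGroup (Fin m) R :=
  ⟨Matrix.transvection i j c, Matrix.det_transvection_of_ne i j hij c⟩

lemma tv_coe {m : ℕ} (i j : Fin m) (hij : i ≠ j) (c : R) :
    ((tv i j hij c : Matrix.SpecialLinearGroup (Fin m) R) : Matrix (Fin m) (Fin m) R)
      = Matrix.transvection i j c := rfl

lemma tv_mem {m : ℕ} (i j : Fin m) (hij : i ≠ j) (c : R) :
    tv i j hij c ∈ Subgroup.closure (TS R m) :=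
  Subgroup.subset_closure ⟨i, j, c, hij, rfl⟩

lemma mem_of_tv_mul {m : ℕ} {i j : Fin m} {hij : i ≠ j} {c : R}
    {A : Matrix.SpecialLinearGroup (Fin m) R}
    (h : tv i j hij c * A ∈ Subgroup.closure (TS R m)) : A ∈ Subgroup.closure (TS R m) := by
  have := Subgroup.mul_mem _ (Subgroup.inv_mem _ (tv_mem i j hij c)) h
  rwa [inv_mul_cancel_left] at this

lemma mem_of_mul_tv {m : ℕ} {i j : Fin m} {hij : i ≠ j} {c : R}
    {A : Matrix.SpecialLinearGroup (Fin m) R}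
    (h : A * tv i j hij c ∈ Subgroup.closure (TS R m)) : A ∈ Subgroup.closure (TS R m) := by
  have := Subgroup.mul_mem _ h (Subgroup.inv_mem _ (tv_mem i j hij c))
  rwa [mul_inv_cancel_right] at this

/-- In a local ring, some entry of the first column of an `SL` matrix is a unit. -/
lemma exists_unit [IsLocalRing R] {m : ℕ} (A : Matrix.SpecialLinearGroup (Fin (m+1)) R) :
    ∃ i, IsUnit ((A : Matrix (Fin (m+1)) (Fin (m+1)) R) i 0) := by
  by_contra h
  push_neg at h
  have hmem : ∀ i, (A : Matrix (Fin (m+1)) (Fin (m+1)) R) i 0 ∈ IsLocalRing.maximalIdeal R :=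
    fun i => (IsLocalRing.mem_maximalIdeal _).2 (h i)
  have hdet : (A : Matrix (Fin (m+1)) (Fin (m+1)) R).det ∈ IsLocalRing.maximalIdeal R := by
    rw [Matrix.det_apply']
    refine Ideal.sum_mem _ fun σ _ => ?_
    apply Ideal.mul_mem_left
    rw [← Finset.mul_prod_erase Finset.univ _ (Finset.mem_univ (0 : Fin (m+1)))]
    exact Ideal.mul_mem_right _ _ (hmem (σ 0))
  rw [A.2] at hdet
  exact (IsLocalRing.maximalIdeal.isMaximal R).ne_top (Ideal.eq_top_of_isUnit_mem _ hdet isUnit_one)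

lemma isUnit_add_of_isUnit [IsLocalRing R] {a b : R} (ha : IsUnit a) (hb : ¬IsUnit b) :
    IsUnit (b + a) := by
  by_contra h
  apply (IsLocalRing.notMem_maximalIdeal).2 ha
  have : (b + a) - b ∈ IsLocalRing.maximalIdeal R :=
    Ideal.sub_mem _ ((IsLocalRing.mem_maximalIdeal _).2 h) ((IsLocalRing.mem_maximalIdeal _).2 hb)
  simpa using this

/-- Block embedding `M ↦ 1 ⊕ M` of matrices. -/
def emb {m : ℕ} (M : Matrix (Fin m) (Fin m) R) : Matrix (Fin (m+1)) (Fin (m+1)) R :=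
  Matrix.of fun i =>
    Fin.cases (motive := fun _ => Fin (m+1) → R)
      (fun j => Fin.cases 1 (fun _ => 0) j)
      (fun i' j => Fin.cases 0 (fun j' => M i' j') j) i

@[simp] lemma emb_zero_zero {m : ℕ} (M : Matrix (Fin m) (Fin m) R) : emb M 0 0 = 1 := rfl
@[simp] lemma emb_zero_succ {m : ℕ} (M : Matrix (Fin m) (Fin m) R) (j : Fin m) :
    emb M 0 j.succ = 0 := by simp [emb]
@[simp] lemma emb_succ_zero {m : ℕ} (M : Matrix (Fin m) (Fin m) R) (i : Fin m) :
    emb M i.succ 0 = 0 := by simp [emb]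
@[simp] lemma emb_succ_succ {m : ℕ} (M : Matrix (Fin m) (Fin m) R) (i j : Fin m) :
    emb M i.succ j.succ = M i j := by simp [emb]

lemma emb_one {m : ℕ} : emb (1 : Matrix (Fin m) (Fin m) R) = 1 := by
  ext i j
  induction i using Fin.cases <;> induction j using Fin.cases <;>
    simp [Matrix.one_apply, Fin.succ_ne_zero, (Fin.succ_ne_zero _).symm, Fin.succ_inj]

lemma emb_mul {m : ℕ} (M N : Matrix (Fin m) (Fin m) R) : emb (M * N) = emb M * emb N := by
  ext i j
  rw [Matrix.mul_apply, Fin.sum_univ_succ]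
  induction i using Fin.cases <;> induction j using Fin.cases <;>
    simp [Matrix.mul_apply]

@[simp] lemma emb_submatrix {m : ℕ} (M : Matrix (Fin m) (Fin m) R) :
    (emb M).submatrix Fin.succ Fin.succ = M := by
  ext i j; simp

lemma det_emb {m : ℕ} (M : Matrix (Fin m) (Fin m) R) : (emb M).det = M.det := by
  rw [Matrix.det_succ_row_zero, Fin.sum_univ_succ]
  simp [Fin.succAbove_zero]

/-- Block embedding as a group homomorphism on `SL`. -/
def embHom {m : ℕ} : Matrix.SpecialLinearGroup (Fin m) R →* Matrix.SpecialLinearGroup (Fin (m+1)) R where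
  toFun M := ⟨emb M.1, by rw [det_emb]; exact M.2⟩
  map_one' := Subtype.ext emb_one
  map_mul' M N := Subtype.ext (emb_mul M.1 N.1)

lemma emb_transvection {m : ℕ} (i j : Fin m) (c : R) :
    emb (1 + Matrix.single i j c)
      = 1 + Matrix.single i.succ j.succ (c : R) := by
  ext a b
  induction a using Fin.cases <;> induction b using Fin.cases <;>
    simp [Matrix.one_apply, Matrix.single, Fin.succ_ne_zero,
      (Fin.succ_ne_zero _).symm, Fin.succ_inj]

lemma embHom_mem {m : ℕ} {M : Matrix.SpecialLinearGroup (Fin m) R}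
    (h : M ∈ Subgroup.closure (TS R m)) : embHom M ∈ Subgroup.closure (TS R (m+1)) := by
  have h2 : (Subgroup.closure (TS R m)).map (embHom (R := R)) ≤ Subgroup.closure (TS R (m+1)) := by
    rw [MonoidHom.map_closure]
    apply Subgroup.closure_mono
    rintro _ ⟨M, ⟨i, j, c, hij, hM⟩, rfl⟩
    refine ⟨i.succ, j.succ, c, fun hc => hij (Fin.succ_injective _ hc), ?_⟩
    show emb M.1 = _
    rw [hM, emb_transvection]
  exact h2 ⟨M, h, rfl⟩


lemma embHom_coe {m : ℕ} (M : Matrix.SpecialLinearGroup (Fin m) R) :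
    (embHom M : Matrix (Fin (m+1)) (Fin (m+1)) R) = emb M.1 := rfl
-- final step: fully reduced matrix
lemma final_step {m : ℕ} (ih : Subgroup.closure (TS R m) = ⊤)
    (A : Matrix.SpecialLinearGroup (Fin (m+1)) R)
    (h00 : (A : Matrix (Fin (m+1)) (Fin (m+1)) R) 0 0 = 1)
    (hcol : ∀ i : Fin m, (A : Matrix (Fin (m+1)) (Fin (m+1)) R) i.succ 0 = 0)
    (hrow : ∀ j : Fin m, (A : Matrix (Fin (m+1)) (Fin (m+1)) R) 0 j.succ = 0) :
    A ∈ Subgroup.closure (TS R (m+1)) := by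
  have hA : (A : Matrix (Fin (m+1)) (Fin (m+1)) R)
      = emb ((A : Matrix (Fin (m+1)) (Fin (m+1)) R).submatrix Fin.succ Fin.succ) := by
    ext i j
    induction i using Fin.cases <;> induction j using Fin.cases <;>
      simp [h00, hcol, hrow]
  have hdet : ((A : Matrix (Fin (m+1)) (Fin (m+1)) R).submatrix Fin.succ Fin.succ).det = 1 := by
    rw [← det_emb, ← hA]; exact A.2
  set B : Matrix.SpecialLinearGroup (Fin m) R := ⟨_, hdet⟩
  have : A = embHom B := Subtype.ext (by rw [embHom_coe]; exact hA)
  rw [this]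
  exact embHom_mem (ih ▸ Subgroup.mem_top B)

lemma clear_row {m : ℕ} (ih : Subgroup.closure (TS R m) = ⊤) (s : Finset (Fin m)) :
    ∀ A : Matrix.SpecialLinearGroup (Fin (m+1)) R,
    (A : Matrix (Fin (m+1)) (Fin (m+1)) R) 0 0 = 1 →
    (∀ i : Fin m, (A : Matrix (Fin (m+1)) (Fin (m+1)) R) i.succ 0 = 0) →
    (∀ j ∉ s, (A : Matrix (Fin (m+1)) (Fin (m+1)) R) 0 j.succ = 0) →
    A ∈ Subgroup.closure (TS R (m+1)) := by
  induction s using Finset.induction_on with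
  | empty =>
    exact fun A h00 hcol hrow => final_step ih A h00 hcol (fun j => hrow j (Finset.notMem_empty j))
  | @insert a s ha IH =>
    intro A h00 hcol hrow
    have hne : (0 : Fin (m+1)) ≠ a.succ := (Fin.succ_ne_zero a).symm
    set c : R := -(A : Matrix (Fin (m+1)) (Fin (m+1)) R) 0 a.succ with hc
    apply mem_of_mul_tv (i := 0) (j := a.succ) (hij := hne) (c := c)
    set A' := A * tv 0 a.succ hne c with hA'
    have hA'coe : (A' : Matrix (Fin (m+1)) (Fin (m+1)) R)
        = (A : Matrix (Fin (m+1)) (Fin (m+1)) R) * Matrix.transvection 0 a.succ c := rfl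
    apply IH A'
    · rw [hA'coe, Matrix.mul_transvection_apply_of_ne _ _ _ _ (Fin.succ_ne_zero a).symm]
      exact h00
    · intro i
      rw [hA'coe, Matrix.mul_transvection_apply_of_ne _ _ _ _ (Fin.succ_ne_zero a).symm]
      exact hcol i
    · intro j hj
      by_cases hja : j = a
      · subst hja
        rw [hA'coe, Matrix.mul_transvection_apply_same]
        rw [h00, hc]; ring
      · have : j.succ ≠ a.succ := fun h => hja (Fin.succ_injective _ h)
        rw [hA'coe, Matrix.mul_transvection_apply_of_ne _ _ _ _ this]
        exact hrow j (by simp [ha, hja, hj])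

lemma clear_col {m : ℕ} (ih : Subgroup.closure (TS R m) = ⊤) (s : Finset (Fin m)) :
    ∀ A : Matrix.SpecialLinearGroup (Fin (m+1)) R,
    (A : Matrix (Fin (m+1)) (Fin (m+1)) R) 0 0 = 1 →
    (∀ i ∉ s, (A : Matrix (Fin (m+1)) (Fin (m+1)) R) i.succ 0 = 0) →
    A ∈ Subgroup.closure (TS R (m+1)) := by
  induction s using Finset.induction_on with
  | empty =>
    exact fun A h00 hcol => clear_row ih Finset.univ A h00
      (fun i => hcol i (Finset.notMem_empty i)) (fun j hj => absurd (Finset.mem_univ j) hj)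
  | @insert a s ha IH =>
    intro A h00 hcol
    set c : R := -(A : Matrix (Fin (m+1)) (Fin (m+1)) R) a.succ 0 with hc
    apply mem_of_tv_mul (i := a.succ) (j := 0) (hij := Fin.succ_ne_zero a) (c := c)
    set A' := tv a.succ 0 (Fin.succ_ne_zero a) c * A with hA'
    have hA'coe : (A' : Matrix (Fin (m+1)) (Fin (m+1)) R)
        = Matrix.transvection a.succ 0 c * (A : Matrix (Fin (m+1)) (Fin (m+1)) R) := rfl
    apply IH A'
    · rw [hA'coe, Matrix.transvection_mul_apply_of_ne _ _ _ _ (Fin.succ_ne_zero a).symm]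
      exact h00
    · intro i hi
      by_cases hia : i = a
      · subst hia
        rw [hA'coe, Matrix.transvection_mul_apply_same]
        rw [h00, hc]; ring
      · have : i.succ ≠ a.succ := fun h => hia (Fin.succ_injective _ h)
        rw [hA'coe, Matrix.transvection_mul_apply_of_ne _ _ _ _ this]
        exact hcol i (by simp [ha, hia, hi])

lemma key [IsLocalRing R] {m : ℕ} (ih : Subgroup.closure (TS R m) = ⊤)
    (A : Matrix.SpecialLinearGroup (Fin (m+1)) R)
    (h : ∃ i, i ≠ 0 ∧ IsUnit ((A : Matrix (Fin (m+1)) (Fin (m+1)) R) i 0)) :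
    A ∈ Subgroup.closure (TS R (m+1)) := by
  obtain ⟨i, hi0, u, hu⟩ := h
  set c : R := (1 - (A : Matrix (Fin (m+1)) (Fin (m+1)) R) 0 0) * (↑u⁻¹ : R) with hc
  apply mem_of_tv_mul (i := 0) (j := i) (hij := (Ne.symm hi0)) (c := c)
  set A' := tv 0 i (Ne.symm hi0) c * A with hA'
  have hA'coe : (A' : Matrix (Fin (m+1)) (Fin (m+1)) R)
      = Matrix.transvection 0 i c * (A : Matrix (Fin (m+1)) (Fin (m+1)) R) := rfl
  apply clear_col ih Finset.univ A' ?_ (fun i hi => absurd (Finset.mem_univ i) hi)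
  rw [hA'coe, Matrix.transvection_mul_apply_same, hc, ← hu, mul_assoc, Units.inv_mul, mul_one]
  ring

theorem closure_TS [IsLocalRing R] (m : ℕ) : Subgroup.closure (TS R m) = ⊤ := by
  induction m with
  | zero =>
    rw [eq_top_iff]
    rintro A -
    have : A = 1 := Subtype.ext (by ext i j; exact i.elim0)
    rw [this]; exact one_mem _
  | succ k ih =>
    rcases k with _ | k'
    · rw [eq_top_iff]
      rintro A -
      have : A = 1 := Subtype.ext (by
        ext i j
        have hi : i = 0 := Fin.ext (Nat.lt_one_iff.mp i.isLt)
        have hj : j = 0 := Fin.ext (Nat.lt_one_iff.mp j.isLt)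
        subst hi; subst hj
        have := A.2
        rw [Matrix.det_fin_one] at this
        simpa using this)
      rw [this]; exact one_mem _
    · rw [eq_top_iff]
      rintro A -
      obtain ⟨i, hiu⟩ := exists_unit A
      set i1 : Fin (k' + 1 + 1) := ⟨1, by omega⟩ with hi1def
      have hi1 : i1 ≠ 0 := by
        intro h; rw [Fin.ext_iff] at h; simp [hi1def] at h
      by_cases hi0 : i = 0
      · by_cases h1 : IsUnit ((A : Matrix (Fin (k'+1+1)) (Fin (k'+1+1)) R) i1 0)
        · exact key ih A ⟨i1, hi1, h1⟩
        · apply mem_of_tv_mul (i := i1) (j := 0) (hij := hi1) (c := (1 : R))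
          set A' := tv i1 0 hi1 (1 : R) * A with hA'
          have hA'coe : (A' : Matrix (Fin (k'+1+1)) (Fin (k'+1+1)) R)
              = Matrix.transvection i1 0 (1 : R) * (A : Matrix (Fin (k'+1+1)) (Fin (k'+1+1)) R) := rfl
          refine key ih A' ⟨i1, hi1, ?_⟩
          rw [hA'coe, Matrix.transvection_mul_apply_same, one_mul]
          exact isUnit_add_of_isUnit (hi0 ▸ hiu) h1
      · exact key ih A ⟨i, hi0, hiu⟩


end SLGen

/-- Over a commutative local ring, `SL_n(R)` is generated by the elementary
matrices (transvections) `I + λ·E_{ij}` with `i ≠ j`. -/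
theorem stmt_0 (R : Type*) [CommRing R] [IsLocalRing R] (n : ℕ) (hn : 1 ≤ n) :
    Subgroup.closure
      {M : Matrix.SpecialLinearGroup (Fin n) R |
        ∃ (i j : Fin n) (c : R), i ≠ j ∧
          (M : Matrix (Fin n) (Fin n) R) = 1 + Matrix.single i j c} = ⊤ :=
  SLGen.closure_TS n
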